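/- Let Q be an irreducible real symmetric n×n matrix with nonnegative off-diagonal entries. Then exactly one of the following holds: (Fin) Q is negative definite; (Aff) Q has corank 1 and its kernel is generated by a vector with strictly positive entries; (Ind) there exists a vector u with strictly positive entries such that Qu has strictly positive entries. -/

import Mathlib

open Matrix

namespace VinbergAux

variable {n : ℕ}

lemma dot_self_pos {v : Fin n → ℝ} (hv : v ≠ 0) : 0 < v ⬝ᵥ v := by
  rcases Function.ne_iff.1 hv with ⟨i, hi⟩
  exact Finset.sum_pos' (fun i _ => mul_self_nonneg _)
    ⟨i, Finset.mem_univ i, mul_self_pos.2 hi⟩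

lemma mulVec_apply' (Q : Matrix (Fin n) (Fin n) ℝ) (u : Fin n → ℝ) (j : Fin n) :
    Q.mulVec u j = ∑ k, Q j k * u k := by
  simp [Matrix.mulVec, dotProduct]

/-- A nonnegative nonzero eigenvector of an irreducible matrix with nonnegative
off-diagonal entries is strictly positive. -/
lemma eig_pos (Q : Matrix (Fin n) (Fin n) ℝ) (hsym : Q.IsSymm)
    (hoff : ∀ i j, i ≠ j → 0 ≤ Q i j)
    (hirr : ∀ s : Finset (Fin n), s.Nonempty → sᶜ.Nonempty →
      ∃ i ∈ s, ∃ j ∈ sᶜ, Q i j ≠ 0)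
    {u : Fin n → ℝ} (hu0 : ∀ i, 0 ≤ u i) (hune : u ≠ 0)
    {μ : ℝ} (heig : Q.mulVec u = μ • u) : ∀ i, 0 < u i := by
  classical
  by_contra h
  push_neg at h
  obtain ⟨j0, hj0⟩ := h
  have hj0 : u j0 = 0 := le_antisymm hj0 (hu0 j0)
  set s : Finset (Fin n) := Finset.univ.filter (fun i => u i ≠ 0) with hs
  have hsne : s.Nonempty := by
    rcases Function.ne_iff.1 hune with ⟨i, hi⟩
    replace hi : u i ≠ 0 := hi
    exact ⟨i, by simp [hs, hi]⟩
  have hscne : sᶜ.Nonempty := ⟨j0, by simp [hs, hj0]⟩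
  obtain ⟨i, hi, j, hj, hQij⟩ := hirr s hsne hscne
  have hine : u i ≠ 0 := by simpa [hs] using hi
  have hui : 0 < u i := lt_of_le_of_ne (hu0 i) (Ne.symm hine)
  have huj : u j = 0 := by simpa [hs] using hj
  have hij : i ≠ j := fun hh => hine (hh ▸ huj)
  have h1 : ∑ k, Q j k * u k = 0 := by
    rw [← mulVec_apply', heig]; simp [huj]
  have h2 : ∀ k ∈ Finset.univ, 0 ≤ Q j k * u k := by
    intro k _
    by_cases hk : k = j
    · subst hk; simp [huj]
    · exact mul_nonneg (hoff j k (Ne.symm hk)) (hu0 k)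
  have h3 : Q j i * u i = 0 :=
    (Finset.sum_eq_zero_iff_of_nonneg h2).1 h1 i (Finset.mem_univ i)
  rcases mul_eq_zero.1 h3 with h | h
  · exact hQij ((hsym.apply j i).trans h)
  · exact hine h

lemma abs_form_le (Q : Matrix (Fin n) (Fin n) ℝ)
    (hoff : ∀ i j, i ≠ j → 0 ≤ Q i j) (v : Fin n → ℝ) :
    v ⬝ᵥ Q.mulVec v ≤ (fun i => |v i|) ⬝ᵥ Q.mulVec (fun i => |v i|) := by
  have expand : ∀ w : Fin n → ℝ, w ⬝ᵥ Q.mulVec w = ∑ i, ∑ j, Q i j * (w i * w j) := by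
    intro w
    simp only [dotProduct]
    refine Finset.sum_congr rfl fun i _ => ?_
    rw [mulVec_apply' Q w i, Finset.mul_sum]
    exact Finset.sum_congr rfl fun j _ => by ring
  rw [expand, expand]
  refine Finset.sum_le_sum fun i _ => Finset.sum_le_sum fun j _ => ?_
  by_cases hij : i = j
  · subst hij
    rw [abs_mul_abs_self]
  · refine mul_le_mul_of_nonneg_left ?_ (hoff i j hij)
    calc v i * v j ≤ |v i * v j| := le_abs_self _
    _ = |v i| * |v j| := abs_mul _ _

lemma form_smul (Q : Matrix (Fin n) (Fin n) ℝ) (c : ℝ) (v : Fin n → ℝ) :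
    (c • v) ⬝ᵥ Q.mulVec (c • v) = c ^ 2 * (v ⬝ᵥ Q.mulVec v) := by
  rw [smul_dotProduct, Matrix.mulVec_smul, dotProduct_smul, smul_eq_mul, smul_eq_mul]
  ring

lemma exists_top_eigen (hn : 0 < n) (Q : Matrix (Fin n) (Fin n) ℝ) (hsym : Q.IsSymm)
    (hoff : ∀ i j, i ≠ j → 0 ≤ Q i j)
    (hirr : ∀ s : Finset (Fin n), s.Nonempty → sᶜ.Nonempty →
      ∃ i ∈ s, ∃ j ∈ sᶜ, Q i j ≠ 0) :
    ∃ (u : Fin n → ℝ) (μ : ℝ), (∀ i, 0 < u i) ∧ Q.mulVec u = μ • u ∧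
      (∀ v : Fin n → ℝ, v ⬝ᵥ Q.mulVec v ≤ μ * (v ⬝ᵥ v)) ∧
      (∀ v : Fin n → ℝ, v ≠ 0 → Q.mulVec v = μ • v → ∀ i, v i ≠ 0) := by
  classical
  set E := EuclideanSpace ℝ (Fin n) with hE
  set e := WithLp.equiv 2 (Fin n → ℝ) with he
  have hherm : Q.IsHermitian := by
    rw [Matrix.IsHermitian, Matrix.conjTranspose_eq_transpose_of_trivial]; exact hsym
  have hTs : (Matrix.toEuclideanLin Q).IsSymmetric :=
    Matrix.isHermitian_iff_isSymmetric.1 hherm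
  set T' := hTs.toSelfAdjoint with hT'
  have hT'app : ∀ x : E, (T' : E →L[ℝ] E) x = Matrix.toEuclideanLin Q x :=
    fun x => hTs.toSelfAdjoint_apply
  have key : ∀ x : E, (T' : E →L[ℝ] E).reApplyInnerSelf x = (e x) ⬝ᵥ Q.mulVec (e x) := by
    intro x
    rw [ContinuousLinearMap.reApplyInnerSelf_apply, hT'app]
    simp only [PiLp.inner_apply, RCLike.inner_apply, dotProduct, conj_trivial,
      Matrix.toEuclideanLin_apply, RCLike.re_to_real]
    exact Finset.sum_congr rfl fun i _ => rfl
  have normsq : ∀ x : E, (e x) ⬝ᵥ (e x) = ‖x‖ ^ 2 := by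
    intro x
    have h : (inner ℝ x x : ℝ) = e x ⬝ᵥ e x := by
      simp only [PiLp.inner_apply, RCLike.inner_apply, conj_trivial, dotProduct]
      rfl
    rw [← real_inner_self_eq_norm_sq, h]
  have i0 : Fin n := ⟨0, hn⟩
  have hsphne : (Metric.sphere (0:E) 1).Nonempty := by
    refine ⟨EuclideanSpace.single i0 1, ?_⟩
    rw [mem_sphere_zero_iff_norm, EuclideanSpace.norm_single]
    simp
  obtain ⟨x₀, hx₀mem, hx₀max⟩ := (isCompact_sphere (0:E) 1).exists_isMaxOn hsphne
    ((T' : E →L[ℝ] E).reApplyInnerSelf_continuous.continuousOn)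
  have hx₀norm : ‖x₀‖ = 1 := by rwa [mem_sphere_zero_iff_norm] at hx₀mem
  set u : Fin n → ℝ := fun i => |e x₀ i| with hu
  set y : E := e.symm u with hy
  have hey : e y = u := e.apply_symm_apply u
  have hynorm : ‖y‖ = 1 := by
    rw [← hx₀norm, EuclideanSpace.norm_eq, EuclideanSpace.norm_eq]
    congr 1
    refine Finset.sum_congr rfl fun i _ => ?_
    have : y i = |e x₀ i| := rfl
    rw [this]
    have hx : x₀ i = e x₀ i := rfl
    rw [hx, Real.norm_eq_abs, Real.norm_eq_abs, abs_abs]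
  have hyne : y ≠ 0 := by intro h; rw [h] at hynorm; simp at hynorm
  have hymem : y ∈ Metric.sphere (0:E) 1 := by rw [mem_sphere_zero_iff_norm]; exact hynorm
  have hcomp : (T' : E →L[ℝ] E).reApplyInnerSelf x₀ ≤ (T' : E →L[ℝ] E).reApplyInnerSelf y := by
    rw [key, key, hey]
    exact abs_form_le Q hoff (e x₀)
  have hymax : IsMaxOn (T' : E →L[ℝ] E).reApplyInnerSelf (Metric.sphere (0:E) ‖y‖) y := by
    rw [hynorm]
    intro x hx
    exact le_trans (hx₀max hx) hcomp
  have heigy := T'.prop.hasEigenvector_of_isMaxOn hyne hymax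
  set μ : ℝ := (⨆ x : {x : E // x ≠ 0}, (T' : E →L[ℝ] E).rayleighQuotient x) with hμ
  have heq : Matrix.toEuclideanLin Q y = μ • y := by
    have h := heigy.apply_eq_smul
    rw [ContinuousLinearMap.coe_coe, hT'app] at h
    simpa [RCLike.ofReal_real_eq_id] using h
  have heqQ : Q.mulVec u = μ • u := by
    have h := congrArg e heq
    change Q.mulVec (e y) = e (μ • y) at h
    rw [hey] at h
    rwa [(show ∀ (c : ℝ) (x : E), e (c • x) = c • e x from fun _ _ => rfl), hey] at h
  have hune : u ≠ 0 := by
    intro h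
    apply hyne
    rw [hy, h]
    rfl
  have hupos : ∀ i, 0 < u i :=
    eig_pos Q hsym hoff hirr (fun i => abs_nonneg _) hune heqQ
  have huu : u ⬝ᵥ u = 1 := by
    have := normsq y
    rw [hey, hynorm] at this
    simpa using this
  have hfu : u ⬝ᵥ Q.mulVec u = μ := by
    rw [heqQ, dotProduct_smul, smul_eq_mul, huu, mul_one]
  have hbound : ∀ v : Fin n → ℝ, v ⬝ᵥ Q.mulVec v ≤ μ * (v ⬝ᵥ v) := by
    intro v
    by_cases hv : v = 0
    · simp [hv]
    · set x : E := e.symm v with hx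
      have hexv : e x = v := e.apply_symm_apply v
      have hxne : x ≠ 0 := by
        intro h
        apply hv
        rw [← hexv, h]
        rfl
      have hxnorm : 0 < ‖x‖ := norm_pos_iff.2 hxne
      set z : E := (‖x‖)⁻¹ • x with hz
      have hznorm : ‖z‖ = 1 := by
        rw [hz, norm_smul, norm_inv, norm_norm, inv_mul_cancel₀ hxnorm.ne']
      have hzmem : z ∈ Metric.sphere (0:E) 1 := by
        rw [mem_sphere_zero_iff_norm]; exact hznorm
      have h1 : (T' : E →L[ℝ] E).reApplyInnerSelf z ≤ μ := by
        have := le_trans (hx₀max hzmem) hcomp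
        rwa [key y, hey, hfu] at this
      have hez : e z = (‖x‖)⁻¹ • v := by
        rw [hz, (show ∀ (c : ℝ) (x : E), e (c • x) = c • e x from fun _ _ => rfl), hexv]
      rw [key, hez, form_smul] at h1
      have h2 : v ⬝ᵥ Q.mulVec v ≤ ‖x‖ ^ 2 * μ := by
        have h3 := mul_le_mul_of_nonneg_left h1 (sq_nonneg ‖x‖)
        calc v ⬝ᵥ Q.mulVec v = ‖x‖ ^ 2 * ((‖x‖⁻¹) ^ 2 * (v ⬝ᵥ Q.mulVec v)) := by
              field_simp
        _ ≤ ‖x‖ ^ 2 * μ := h3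
      have hvv : v ⬝ᵥ v = ‖x‖ ^ 2 := by
        have hh := normsq x
        rwa [hexv] at hh
      rw [hvv]
      linarith [h2]
  have hker : ∀ v : Fin n → ℝ, v ≠ 0 → Q.mulVec v = μ • v → ∀ i, v i ≠ 0 := by
    intro v hv hQv
    set w : Fin n → ℝ := fun i => |v i| with hw
    set xw : E := e.symm w with hxw
    have hexw : e xw = w := e.apply_symm_apply w
    have hwv : w ⬝ᵥ w = v ⬝ᵥ v := by
      simp only [dotProduct, hw, abs_mul_abs_self]
    have hfv : v ⬝ᵥ Q.mulVec v = μ * (v ⬝ᵥ v) := by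
      rw [hQv, dotProduct_smul, smul_eq_mul]
    have hfw : w ⬝ᵥ Q.mulVec w = μ * (w ⬝ᵥ w) := by
      refine le_antisymm (hbound w) ?_
      rw [hwv, ← hfv]
      exact abs_form_le Q hoff v
    have hwne : w ≠ 0 := by
      intro h
      apply hv
      funext i
      exact abs_eq_zero.1 (congrFun h i)
    have hxwne : xw ≠ 0 := by
      intro h
      apply hwne
      rw [← hexw, h]
      rfl
    have hmaxw : IsMaxOn (T' : E →L[ℝ] E).reApplyInnerSelf (Metric.sphere (0:E) ‖xw‖) xw := by
      intro zz hzz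
      have hzznorm : ‖zz‖ = ‖xw‖ := by
        simpa [mem_sphere_zero_iff_norm] using hzz
      have h1 : (e zz) ⬝ᵥ Q.mulVec (e zz) ≤ μ * ((e zz) ⬝ᵥ (e zz)) := hbound (e zz)
      have h2 : μ * ((e zz) ⬝ᵥ (e zz)) = μ * (w ⬝ᵥ w) := by
        rw [normsq, hzznorm, ← normsq xw, hexw]
      simp only [Set.mem_setOf_eq]
      rw [key, key, hexw, hfw]
      rw [h2] at h1
      exact h1
    have heigw := T'.prop.hasEigenvector_of_isMaxOn hxwne hmaxw
    have heqw : Matrix.toEuclideanLin Q xw = μ • xw := by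
      have h := heigw.apply_eq_smul
      rw [ContinuousLinearMap.coe_coe, hT'app] at h
      simpa [RCLike.ofReal_real_eq_id] using h
    have heqQw : Q.mulVec w = μ • w := by
      have h := congrArg e heqw
      change Q.mulVec (e xw) = e (μ • xw) at h
      rw [hexw] at h
      rwa [(show ∀ (c : ℝ) (x : E), e (c • x) = c • e x from fun _ _ => rfl), hexw] at h
    have hwpos : ∀ i, 0 < w i :=
      eig_pos Q hsym hoff hirr (fun i => abs_nonneg _) hwne heqQw
    intro i
    exact abs_pos.1 (hwpos i)
  exact ⟨u, μ, hupos, heqQ, hbound, hker⟩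

end VinbergAux

/-- Vinberg's trichotomy: an irreducible real symmetric matrix with
nonnegative off-diagonal entries is of exactly one of finite, affine, or
indefinite type. -/
theorem stmt_2 {n : ℕ} (hn : 0 < n) (Q : Matrix (Fin n) (Fin n) ℝ)
    (hsym : Q.IsSymm)
    (hoff : ∀ i j, i ≠ j → 0 ≤ Q i j)
    (hirr : ∀ s : Finset (Fin n), s.Nonempty → sᶜ.Nonempty →
      ∃ i ∈ s, ∃ j ∈ sᶜ, Q i j ≠ 0) :
    let Fin' : Prop := ∀ v : Fin n → ℝ, v ≠ 0 → v ⬝ᵥ Q.mulVec v < 0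
    let Aff : Prop := ∃ u : Fin n → ℝ, (∀ i, 0 < u i) ∧ Q.mulVec u = 0 ∧
      ∀ v : Fin n → ℝ, Q.mulVec v = 0 → ∃ c : ℝ, v = c • u
    let Ind : Prop := ∃ u : Fin n → ℝ, (∀ i, 0 < u i) ∧ ∀ i, 0 < Q.mulVec u i
    (Fin' ∧ ¬ Aff ∧ ¬ Ind) ∨ (¬ Fin' ∧ Aff ∧ ¬ Ind) ∨ (¬ Fin' ∧ ¬ Aff ∧ Ind) := by
  intro Fin' Aff Ind
  classical
  obtain ⟨u, μ, hupos, heig, hbound, hker⟩ := VinbergAux.exists_top_eigen hn Q hsym hoff hirr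
  have i0 : Fin n := ⟨0, hn⟩
  have hune : u ≠ 0 := fun h => (hupos i0).ne' (congrFun h i0)
  have hvecmul : ∀ w : Fin n → ℝ, w ᵥ* Q = Q *ᵥ w := by
    intro w
    conv_lhs => rw [← hsym]
    exact Matrix.vecMul_transpose Q w
  rcases lt_trichotomy μ 0 with hμ | hμ | hμ
  · -- finite type
    have hFin : Fin' := by
      intro v hv
      have h1 := hbound v
      have h2 : 0 < v ⬝ᵥ v := VinbergAux.dot_self_pos hv
      nlinarith
    refine Or.inl ⟨hFin, ?_, ?_⟩
    · rintro ⟨w, hw, hkerw, -⟩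
      have h := hFin w (fun h => (hw i0).ne' (congrFun h i0))
      rw [hkerw] at h
      simp at h
    · rintro ⟨z, hz, hQz⟩
      have hzne : z ≠ 0 := fun h => (hz i0).ne' (congrFun h i0)
      have h := hFin z hzne
      have h2 : 0 < z ⬝ᵥ Q.mulVec z :=
        Finset.sum_pos (fun i _ => mul_pos (hz i) (hQz i)) ⟨i0, Finset.mem_univ i0⟩
      linarith
  · -- affine type
    have hQu : Q.mulVec u = 0 := by rw [heig, hμ, zero_smul]
    have hAff : Aff := by
      refine ⟨u, hupos, hQu, ?_⟩
      intro v hv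
      by_cases hv0 : v = 0
      · exact ⟨0, by rw [hv0, zero_smul]⟩
      · refine ⟨v i0 / u i0, ?_⟩
        set w := v - (v i0 / u i0) • u with hwdef
        by_cases hw0 : w = 0
        · exact sub_eq_zero.1 hw0
        · exfalso
          have hQw : Q.mulVec w = μ • w := by
            rw [hμ, zero_smul, hwdef, Matrix.mulVec_sub, hv, Matrix.mulVec_smul, hQu]
            simp
          refine hker w hw0 hQw i0 ?_
          rw [hwdef]
          have : u i0 ≠ 0 := (hupos i0).ne'
          simp only [Pi.sub_apply, Pi.smul_apply, smul_eq_mul]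
          field_simp
          ring
    refine Or.inr (Or.inl ⟨?_, hAff, ?_⟩)
    · intro hFin
      have h := hFin u hune
      rw [hQu] at h
      simp at h
    · rintro ⟨z, hz, hQz⟩
      have h2 : 0 < u ⬝ᵥ Q.mulVec z :=
        Finset.sum_pos (fun i _ => mul_pos (hupos i) (hQz i)) ⟨i0, Finset.mem_univ i0⟩
      rw [Matrix.dotProduct_mulVec, hvecmul, hQu] at h2
      simp at h2
  · -- indefinite type
    have hInd : Ind := by
      refine ⟨u, hupos, fun i => ?_⟩
      rw [heig]
      exact mul_pos hμ (hupos i)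
    refine Or.inr (Or.inr ⟨?_, ?_, hInd⟩)
    · intro hFin
      have h := hFin u hune
      have h2 : u ⬝ᵥ Q.mulVec u = μ * (u ⬝ᵥ u) := by
        rw [heig, dotProduct_smul, smul_eq_mul]
      nlinarith [VinbergAux.dot_self_pos hune]
    · rintro ⟨w, hw, hQw, -⟩
      have h1 : 0 < w ⬝ᵥ u :=
        Finset.sum_pos (fun i _ => mul_pos (hw i) (hupos i)) ⟨i0, Finset.mem_univ i0⟩
      have h2 : w ⬝ᵥ Q.mulVec u = μ * (w ⬝ᵥ u) := by
        rw [heig, dotProduct_smul, smul_eq_mul]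
      rw [Matrix.dotProduct_mulVec, hvecmul, hQw] at h2
      simp only [zero_dotProduct] at h2
      nlinarith
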